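/- arXiv:2306.17512 — 2 statements merged into one kernel-verified Lean document; each statement's English description precedes it below -/
import Mathlib

section
/- The extremal Kerr horizon data satisfies the horizon Einstein equation with zero cosmological constant: on the surface with coordinates (x, φ), x ∈ (-1,1), with metric g = a²(1+x²)/(1-x²) dx² + 4a²(1-x²)/(1+x²) dφ² and one-form X♭ = (K♭ - dΓ)/Γ where Γ = (1+x²)/2 and K = (1/(2a²)) ∂_φ, the equation Ric(g) = ½ X♭ ⊗ X♭ - ½ L_X g holds, where X is the vector field g-dual to X♭. -/
noncomputable section

open scoped BigOperators

/-- Partial derivative of a function on `ℝⁿ` in the `i`-th coordinate direction. -/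
def pd {n : ℕ} (i : Fin n) (f : (Fin n → ℝ) → ℝ) (x : Fin n → ℝ) : ℝ :=
  fderiv ℝ f x (Pi.single i 1)

/-- Christoffel symbols `Γ^k_{ij}` of a metric `g` with inverse `ginv`. -/
def christoffel {n : ℕ} (g ginv : (Fin n → ℝ) → Matrix (Fin n) (Fin n) ℝ)
    (k i j : Fin n) (x : Fin n → ℝ) : ℝ :=
  (1/2) * ∑ l, ginv x k l *
    (pd i (fun y => g y j l) x + pd j (fun y => g y i l) x - pd l (fun y => g y i j) x)

/-- Ricci tensor `R_{ij}` in coordinates. -/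
def ricci {n : ℕ} (g ginv : (Fin n → ℝ) → Matrix (Fin n) (Fin n) ℝ)
    (i j : Fin n) (x : Fin n → ℝ) : ℝ :=
  (∑ k, pd k (christoffel g ginv k i j) x)
  - (∑ k, pd j (christoffel g ginv k i k) x)
  + (∑ k, ∑ l, christoffel g ginv k k l x * christoffel g ginv l i j x)
  - (∑ k, ∑ l, christoffel g ginv k j l x * christoffel g ginv l i k x)

/-- Covariant derivative `∇_a ω_b` of a one-form. -/
def covd {n : ℕ} (g ginv : (Fin n → ℝ) → Matrix (Fin n) (Fin n) ℝ)
    (ω : Fin n → (Fin n → ℝ) → ℝ) (a b : Fin n) (x : Fin n → ℝ) : ℝ :=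
  pd a (ω b) x - ∑ c, christoffel g ginv c a b x * ω c x

/-- Raise the index of a one-form, producing vector-field components. -/
def raise {n : ℕ} (ginv : (Fin n → ℝ) → Matrix (Fin n) (Fin n) ℝ)
    (ω : Fin n → (Fin n → ℝ) → ℝ) (a : Fin n) (x : Fin n → ℝ) : ℝ :=
  ∑ b, ginv x a b * ω b x

/-- Lie derivative `(L_V g)_{ij}` of the metric along a vector field `V`. -/
def lieMetric {n : ℕ} (g : (Fin n → ℝ) → Matrix (Fin n) (Fin n) ℝ)
    (V : Fin n → (Fin n → ℝ) → ℝ) (i j : Fin n) (x : Fin n → ℝ) : ℝ :=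
  (∑ k, V k x * pd k (fun y => g y i j) x)
  + (∑ k, g x k j * pd i (V k) x) + (∑ k, g x i k * pd j (V k) x)

/-- The horizon Einstein equation `Ric = ½ X♭⊗X♭ − ½ L_X g + λ g` at a point,
for the one-form `ω = X♭` (with `X` its `g`-dual vector field). -/
def HorizonEq {n : ℕ} (g ginv : (Fin n → ℝ) → Matrix (Fin n) (Fin n) ℝ)
    (ω : Fin n → (Fin n → ℝ) → ℝ) (lam : ℝ) (x : Fin n → ℝ) : Prop :=
  ∀ i j, ricci g ginv i j x =
    (1/2) * ω i x * ω j x - (1/2) * lieMetric g (raise ginv ω) i j x + lam * g x i j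

namespace Kerr

variable (a : ℝ)

/-- The extremal Kerr horizon metric $g = a²(1+x²)/(1-x²)\,dx² + 4a²(1-x²)/(1+x²)\,dφ²$
in coordinates $p = (x, φ)$. -/
def kerrMetric (p : Fin 2 → ℝ) : Matrix (Fin 2) (Fin 2) ℝ :=
  !![a^2 * (1 + (p 0)^2) / (1 - (p 0)^2), 0;
     0, 4 * a^2 * (1 - (p 0)^2) / (1 + (p 0)^2)]

/-- The inverse of the extremal Kerr horizon metric. -/
def kerrMetricInv (p : Fin 2 → ℝ) : Matrix (Fin 2) (Fin 2) ℝ :=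
  !![(1 - (p 0)^2) / (a^2 * (1 + (p 0)^2)), 0;
     0, (1 + (p 0)^2) / (4 * a^2 * (1 - (p 0)^2))]

/-- $Γ = (1+x²)/2$. -/
def kerrGamma (p : Fin 2 → ℝ) : ℝ := (1 + (p 0)^2) / 2

/-- The vector field $K = (1/(2a²)) ∂_φ$. -/
def kerrK : Fin 2 → (Fin 2 → ℝ) → ℝ :=
  ![fun _ => 0, fun _ => 1 / (2 * a^2)]

/-- The one-form $K^♭$, the $g$-dual of $K$. -/
def kerrKflat (i : Fin 2) (p : Fin 2 → ℝ) : ℝ :=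
  ∑ j, kerrMetric a p i j * kerrK a j p

/-- The one-form $X^♭ = (K^♭ - dΓ)/Γ$. -/
def kerrXflat (i : Fin 2) (p : Fin 2 → ℝ) : ℝ :=
  (kerrKflat a i p - pd i kerrGamma p) / kerrGamma p


/-! ### Auxiliary machinery -/

section PDHelpers

lemma pd0_eval {f : ℝ → ℝ} {f' : ℝ} {p : Fin 2 → ℝ} (hf : HasDerivAt f f' (p 0)) :
    pd 0 (fun y => f (y 0)) p = f' := by
  have h : HasFDerivAt (fun y : Fin 2 → ℝ => f (y 0))
      (f' • (ContinuousLinearMap.proj 0 : (Fin 2 → ℝ) →L[ℝ] ℝ)) p :=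
    hf.comp_hasFDerivAt p (hasFDerivAt_apply 0 p)
  rw [pd, h.fderiv]
  simp

lemma pd1_eval {f : ℝ → ℝ} {f' : ℝ} {p : Fin 2 → ℝ} (hf : HasDerivAt f f' (p 0)) :
    pd 1 (fun y => f (y 0)) p = 0 := by
  have h : HasFDerivAt (fun y : Fin 2 → ℝ => f (y 0))
      (f' • (ContinuousLinearMap.proj 0 : (Fin 2 → ℝ) →L[ℝ] ℝ)) p :=
    hf.comp_hasFDerivAt p (hasFDerivAt_apply 0 p)
  rw [pd, h.fderiv]
  simp

lemma pd_const {c : ℝ} {i : Fin 2} {p : Fin 2 → ℝ} : pd i (fun _ => c) p = 0 := by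
  simp [pd]

lemma pd_congr {f g : (Fin 2 → ℝ) → ℝ} {p : Fin 2 → ℝ} (i : Fin 2) (h : f =ᶠ[nhds p] g) :
    pd i f p = pd i g p := by
  unfold pd; rw [h.fderiv_eq]

variable {s : ℝ}

lemma hd_sq : HasDerivAt (fun t : ℝ => 1+t^2) (2*s) s := by
  simpa using (hasDerivAt_pow 2 s).const_add 1

lemma hd_m00 {a : ℝ} (hs : 1 - s^2 ≠ 0) :
    HasDerivAt (fun t : ℝ => a^2*(1+t^2)/(1-t^2)) (4*a^2*s/(1-s^2)^2) s := by
  have h1 : HasDerivAt (fun t : ℝ => a^2*(1+t^2)) (a^2*(2*s)) s := by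
    simpa using ((hasDerivAt_pow 2 s).const_add 1).const_mul (a^2)
  have h2 : HasDerivAt (fun t : ℝ => 1-t^2) (-(2*s)) s := by
    simpa using (hasDerivAt_pow 2 s).const_sub 1
  refine (h1.fun_div h2 hs).congr_deriv ?_
  field_simp
  ring

lemma hd_m11 {a : ℝ} :
    HasDerivAt (fun t : ℝ => 4*a^2*(1-t^2)/(1+t^2)) (-16*a^2*s/(1+s^2)^2) s := by
  have hs : (1:ℝ)+s^2 ≠ 0 := by positivity
  have h1 : HasDerivAt (fun t : ℝ => 4*a^2*(1-t^2)) (4*a^2*(-(2*s))) s := by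
    simpa using ((hasDerivAt_pow 2 s).const_sub 1).const_mul (4*a^2)
  refine (h1.fun_div hd_sq hs).congr_deriv ?_
  field_simp
  ring

lemma hd_gamma : HasDerivAt (fun t : ℝ => (1+t^2)/2) s s := by
  simpa using ((hasDerivAt_pow 2 s).const_add 1).div_const 2

lemma hd_c000 (hs : 1 - s^2 ≠ 0) :
    HasDerivAt (fun t : ℝ => 2*t/((1-t^2)*(1+t^2)))
      ((2+6*s^4)/((1-s^2)^2*(1+s^2)^2)) s := by
  have hs2 : (1:ℝ)+s^2 ≠ 0 := by positivity
  have h1 : HasDerivAt (fun t : ℝ => 2*t) 2 s := by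
    simpa using (hasDerivAt_id s).const_mul 2
  have h2 : HasDerivAt (fun t : ℝ => 1-t^2) (-(2*s)) s := by
    simpa using (hasDerivAt_pow 2 s).const_sub 1
  refine (h1.fun_div (h2.fun_mul hd_sq) (mul_ne_zero hs hs2)).congr_deriv ?_
  field_simp
  ring

lemma hd_c101 (hs : 1 - s^2 ≠ 0) :
    HasDerivAt (fun t : ℝ => -(2*t)/((1-t^2)*(1+t^2)))
      (-((2+6*s^4)/((1-s^2)^2*(1+s^2)^2))) s := by
  simpa [neg_div] using (hd_c000 hs).fun_neg

lemma hd_c011 :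
    HasDerivAt (fun t : ℝ => (8*t-8*t^3)/(1+t^2)^3)
      ((8-64*s^2+24*s^4)/(1+s^2)^4) s := by
  have hs2 : ((1:ℝ)+s^2)^3 ≠ 0 := by positivity
  have h1 : HasDerivAt (fun t : ℝ => 8*t-8*t^3) (8-8*(3*s^2)) s := by
    have := ((hasDerivAt_id s).const_mul 8).fun_sub ((hasDerivAt_pow 3 s).const_mul 8)
    simpa using this
  have h2 : HasDerivAt (fun t : ℝ => (1+t^2)^3) (3*(1+s^2)^2*(2*s)) s := by
    simpa using hd_sq.fun_pow 3
  refine (h1.fun_div h2 hs2).congr_deriv ?_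
  have hs4 : (1:ℝ)+s^2 ≠ 0 := by positivity
  field_simp
  ring

lemma hd_v0 {a : ℝ} (ha : a ≠ 0) :
    HasDerivAt (fun t : ℝ => (2*t^3-2*t)/(a^2*(1+t^2)^2))
      ((-2+12*s^2-2*s^4)/(a^2*(1+s^2)^3)) s := by
  have hs4 : (1:ℝ)+s^2 ≠ 0 := by positivity
  have hne : a^2*(1+s^2)^2 ≠ 0 := by positivity
  have h1 : HasDerivAt (fun t : ℝ => 2*t^3-2*t) (2*(3*s^2)-2) s := by
    have := ((hasDerivAt_pow 3 s).const_mul 2).fun_sub ((hasDerivAt_id s).const_mul 2)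
    simpa using this
  have h2 : HasDerivAt (fun t : ℝ => a^2*(1+t^2)^2) (a^2*(2*(1+s^2)*(2*s))) s := by
    simpa using (hd_sq.pow 2).const_mul (a^2)
  refine (h1.fun_div h2 hne).congr_deriv ?_
  field_simp
  ring

lemma hd_v1 {a : ℝ} (ha : a ≠ 0) :
    HasDerivAt (fun t : ℝ => 1/(a^2*(1+t^2))) (-(2*s)/(a^2*(1+s^2)^2)) s := by
  have hs4 : (1:ℝ)+s^2 ≠ 0 := by positivity
  have hne : a^2*(1+s^2) ≠ 0 := by positivity
  have h2 : HasDerivAt (fun t : ℝ => a^2*(1+t^2)) (a^2*(2*s)) s := by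
    simpa using hd_sq.const_mul (a^2)
  refine ((hasDerivAt_const s (1:ℝ)).fun_div h2 hne).congr_deriv ?_
  field_simp
  ring

end PDHelpers

/-! ### Partial derivatives of the metric entries -/

lemma pd_gamma0 (y : Fin 2 → ℝ) : pd 0 kerrGamma y = y 0 := by
  have he : kerrGamma = fun z : Fin 2 → ℝ => (1+(z 0)^2)/2 := rfl
  rw [he]; exact pd0_eval hd_gamma

lemma pd_gamma1 (y : Fin 2 → ℝ) : pd 1 kerrGamma y = 0 := by
  have he : kerrGamma = fun z : Fin 2 → ℝ => (1+(z 0)^2)/2 := rfl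
  rw [he]; exact pd1_eval hd_gamma

lemma pdg000 {y : Fin 2 → ℝ} (hy : 1 - (y 0)^2 ≠ 0) :
    pd 0 (fun z => kerrMetric a z 0 0) y = 4*a^2*(y 0)/(1-(y 0)^2)^2 := by
  have he : (fun z : Fin 2 → ℝ => kerrMetric a z 0 0)
      = fun z => a^2*(1+(z 0)^2)/(1-(z 0)^2) := by
    funext z; simp [kerrMetric]
  rw [he]; exact pd0_eval (hd_m00 hy)

lemma pdg100 {y : Fin 2 → ℝ} (hy : 1 - (y 0)^2 ≠ 0) :
    pd 1 (fun z => kerrMetric a z 0 0) y = 0 := by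
  have he : (fun z : Fin 2 → ℝ => kerrMetric a z 0 0)
      = fun z => a^2*(1+(z 0)^2)/(1-(z 0)^2) := by
    funext z; simp [kerrMetric]
  rw [he]; exact pd1_eval (hd_m00 hy)

lemma pdg011 (y : Fin 2 → ℝ) :
    pd 0 (fun z => kerrMetric a z 1 1) y = -16*a^2*(y 0)/(1+(y 0)^2)^2 := by
  have he : (fun z : Fin 2 → ℝ => kerrMetric a z 1 1)
      = fun z => 4*a^2*(1-(z 0)^2)/(1+(z 0)^2) := by
    funext z; simp [kerrMetric]
  rw [he]; exact pd0_eval hd_m11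

lemma pdg111 (y : Fin 2 → ℝ) :
    pd 1 (fun z => kerrMetric a z 1 1) y = 0 := by
  have he : (fun z : Fin 2 → ℝ => kerrMetric a z 1 1)
      = fun z => 4*a^2*(1-(z 0)^2)/(1+(z 0)^2) := by
    funext z; simp [kerrMetric]
  rw [he]; exact pd1_eval hd_m11

lemma pdg_off (i : Fin 2) (y : Fin 2 → ℝ) :
    pd i (fun z => kerrMetric a z 0 1) y = 0 := by
  have he : (fun z : Fin 2 → ℝ => kerrMetric a z 0 1) = fun _ => (0:ℝ) := by
    funext z; simp [kerrMetric]
  rw [he]; exact pd_const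

lemma pdg_off' (i : Fin 2) (y : Fin 2 → ℝ) :
    pd i (fun z => kerrMetric a z 1 0) y = 0 := by
  have he : (fun z : Fin 2 → ℝ => kerrMetric a z 1 0) = fun _ => (0:ℝ) := by
    funext z; simp [kerrMetric]
  rw [he]; exact pd_const

/-! ### Christoffel symbols -/

lemma ch000 (ha : a ≠ 0) {y : Fin 2 → ℝ} (hy : 1 - (y 0)^2 ≠ 0) :
    christoffel (kerrMetric a) (kerrMetricInv a) 0 0 0 y
      = 2*(y 0)/((1-(y 0)^2)*(1+(y 0)^2)) := by
  have h2 : (1:ℝ) + (y 0)^2 ≠ 0 := by positivity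
  rw [christoffel, Fin.sum_univ_two]
  simp only [pdg000 a hy, pdg100 a hy, pdg011 a y, pdg111 a y, pdg_off a _ y, pdg_off' a _ y]
  simp [kerrMetricInv]
  field_simp
  ring

lemma ch001 (ha : a ≠ 0) {y : Fin 2 → ℝ} (hy : 1 - (y 0)^2 ≠ 0) :
    christoffel (kerrMetric a) (kerrMetricInv a) 0 0 1 y = 0 := by
  rw [christoffel, Fin.sum_univ_two]
  simp only [pdg000 a hy, pdg100 a hy, pdg011 a y, pdg111 a y, pdg_off a _ y, pdg_off' a _ y]
  simp [kerrMetricInv]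

lemma ch010 (ha : a ≠ 0) {y : Fin 2 → ℝ} (hy : 1 - (y 0)^2 ≠ 0) :
    christoffel (kerrMetric a) (kerrMetricInv a) 0 1 0 y = 0 := by
  rw [christoffel, Fin.sum_univ_two]
  simp only [pdg000 a hy, pdg100 a hy, pdg011 a y, pdg111 a y, pdg_off a _ y, pdg_off' a _ y]
  simp [kerrMetricInv]

lemma ch011 (ha : a ≠ 0) {y : Fin 2 → ℝ} (hy : 1 - (y 0)^2 ≠ 0) :
    christoffel (kerrMetric a) (kerrMetricInv a) 0 1 1 y
      = (8*(y 0)-8*(y 0)^3)/(1+(y 0)^2)^3 := by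
  have h2 : (1:ℝ) + (y 0)^2 ≠ 0 := by positivity
  rw [christoffel, Fin.sum_univ_two]
  simp only [pdg000 a hy, pdg100 a hy, pdg011 a y, pdg111 a y, pdg_off a _ y, pdg_off' a _ y]
  simp [kerrMetricInv]
  field_simp
  ring

lemma ch100 (ha : a ≠ 0) {y : Fin 2 → ℝ} (hy : 1 - (y 0)^2 ≠ 0) :
    christoffel (kerrMetric a) (kerrMetricInv a) 1 0 0 y = 0 := by
  rw [christoffel, Fin.sum_univ_two]
  simp only [pdg000 a hy, pdg100 a hy, pdg011 a y, pdg111 a y, pdg_off a _ y, pdg_off' a _ y]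
  simp [kerrMetricInv]

lemma ch101 (ha : a ≠ 0) {y : Fin 2 → ℝ} (hy : 1 - (y 0)^2 ≠ 0) :
    christoffel (kerrMetric a) (kerrMetricInv a) 1 0 1 y
      = -(2*(y 0))/((1-(y 0)^2)*(1+(y 0)^2)) := by
  have h2 : (1:ℝ) + (y 0)^2 ≠ 0 := by positivity
  rw [christoffel, Fin.sum_univ_two]
  simp only [pdg000 a hy, pdg100 a hy, pdg011 a y, pdg111 a y, pdg_off a _ y, pdg_off' a _ y]
  simp [kerrMetricInv]
  field_simp
  ring

lemma ch110 (ha : a ≠ 0) {y : Fin 2 → ℝ} (hy : 1 - (y 0)^2 ≠ 0) :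
    christoffel (kerrMetric a) (kerrMetricInv a) 1 1 0 y
      = -(2*(y 0))/((1-(y 0)^2)*(1+(y 0)^2)) := by
  have h2 : (1:ℝ) + (y 0)^2 ≠ 0 := by positivity
  rw [christoffel, Fin.sum_univ_two]
  simp only [pdg000 a hy, pdg100 a hy, pdg011 a y, pdg111 a y, pdg_off a _ y, pdg_off' a _ y]
  simp [kerrMetricInv]
  field_simp
  ring

lemma ch111 (ha : a ≠ 0) {y : Fin 2 → ℝ} (hy : 1 - (y 0)^2 ≠ 0) :
    christoffel (kerrMetric a) (kerrMetricInv a) 1 1 1 y = 0 := by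
  rw [christoffel, Fin.sum_univ_two]
  simp only [pdg000 a hy, pdg100 a hy, pdg011 a y, pdg111 a y, pdg_off a _ y, pdg_off' a _ y]
  simp [kerrMetricInv]

/-! ### The one-form `X♭` and the vector field `X` -/

lemma xf0 (y : Fin 2 → ℝ) : kerrXflat a 0 y = -(2*(y 0))/(1+(y 0)^2) := by
  have h2 : (1:ℝ)+(y 0)^2 ≠ 0 := by positivity
  rw [kerrXflat, pd_gamma0]
  rw [show kerrKflat a 0 y = 0 by simp [kerrKflat, kerrMetric, kerrK, Fin.sum_univ_two]]
  rw [kerrGamma, div_eq_div_iff (by positivity) h2]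
  ring

lemma xf1 (ha : a ≠ 0) (y : Fin 2 → ℝ) :
    kerrXflat a 1 y = (4-4*(y 0)^2)/((1+(y 0)^2)^2) := by
  have h2 : (1:ℝ)+(y 0)^2 ≠ 0 := by positivity
  have hk : kerrKflat a 1 y = 2*(1-(y 0)^2)/(1+(y 0)^2) := by
    rw [kerrKflat, Fin.sum_univ_two]
    simp [kerrMetric, kerrK]
    field_simp
    ring
  rw [kerrXflat, pd_gamma1, hk, kerrGamma, sub_zero,
    div_eq_div_iff (by positivity) (by positivity)]
  field_simp
  ring

lemma v0_eq (ha : a ≠ 0) {y : Fin 2 → ℝ} (hy : 1 - (y 0)^2 ≠ 0) :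
    raise (kerrMetricInv a) (kerrXflat a) 0 y
      = (2*(y 0)^3-2*(y 0))/(a^2*(1+(y 0)^2)^2) := by
  have h2 : (1:ℝ)+(y 0)^2 ≠ 0 := by positivity
  rw [raise, Fin.sum_univ_two, xf0 a y, xf1 a ha y]
  simp [kerrMetricInv]
  field_simp
  ring

lemma v1_eq (ha : a ≠ 0) {y : Fin 2 → ℝ} (hy : 1 - (y 0)^2 ≠ 0) :
    raise (kerrMetricInv a) (kerrXflat a) 1 y = 1/(a^2*(1+(y 0)^2)) := by
  have h2 : (1:ℝ)+(y 0)^2 ≠ 0 := by positivity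
  rw [raise, Fin.sum_univ_two, xf0 a y, xf1 a ha y]
  simp [kerrMetricInv]
  field_simp


set_option maxHeartbeats 2000000 in
/-- The extremal Kerr horizon data satisfies the horizon Einstein
equation $\mathrm{Ric}(g) = ½ X^♭ ⊗ X^♭ - ½ \mathcal{L}_X g$ (zero cosmological
constant) at every point of the coordinate chart $(x,φ)$ with $x ∈ (-1,1)$. -/
theorem kerr_horizon_einstein (ha : 0 < a) (p : Fin 2 → ℝ) (hx : p 0 ∈ Set.Ioo (-1 : ℝ) 1) :
    HorizonEq (kerrMetric a) (kerrMetricInv a) (kerrXflat a) 0 p := by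
  have ha' : a ≠ 0 := ne_of_gt ha
  obtain ⟨hx1, hx2⟩ := hx
  have hp : 1 - (p 0)^2 ≠ 0 := by nlinarith
  have h2p : (1:ℝ) + (p 0)^2 ≠ 0 := by positivity
  have hmem : ∀ᶠ y in nhds p, 1 - (y 0)^2 ≠ 0 := by
    have hc : ContinuousAt (fun y : Fin 2 → ℝ => 1 - (y 0)^2) p :=
      (continuous_const.sub ((continuous_apply 0).pow 2)).continuousAt
    exact hc.eventually_ne hp
  -- Christoffel values at p
  have c000 := ch000 a ha' hp
  have c001 := ch001 a ha' hp
  have c010 := ch010 a ha' hp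
  have c011 := ch011 a ha' hp
  have c100 := ch100 a ha' hp
  have c101 := ch101 a ha' hp
  have c110 := ch110 a ha' hp
  have c111 := ch111 a ha' hp
  -- eventual equalities for the Christoffel symbols
  have E000 : christoffel (kerrMetric a) (kerrMetricInv a) 0 0 0
      =ᶠ[nhds p] (fun y => 2*(y 0)/((1-(y 0)^2)*(1+(y 0)^2))) :=
    hmem.mono fun y hy => ch000 a ha' hy
  have E001 : christoffel (kerrMetric a) (kerrMetricInv a) 0 0 1
      =ᶠ[nhds p] (fun _ => (0:ℝ)) := hmem.mono fun y hy => ch001 a ha' hy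
  have E010 : christoffel (kerrMetric a) (kerrMetricInv a) 0 1 0
      =ᶠ[nhds p] (fun _ => (0:ℝ)) := hmem.mono fun y hy => ch010 a ha' hy
  have E011 : christoffel (kerrMetric a) (kerrMetricInv a) 0 1 1
      =ᶠ[nhds p] (fun y => (8*(y 0)-8*(y 0)^3)/(1+(y 0)^2)^3) :=
    hmem.mono fun y hy => ch011 a ha' hy
  have E100 : christoffel (kerrMetric a) (kerrMetricInv a) 1 0 0
      =ᶠ[nhds p] (fun _ => (0:ℝ)) := hmem.mono fun y hy => ch100 a ha' hy
  have E101 : christoffel (kerrMetric a) (kerrMetricInv a) 1 0 1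
      =ᶠ[nhds p] (fun y => -(2*(y 0))/((1-(y 0)^2)*(1+(y 0)^2))) :=
    hmem.mono fun y hy => ch101 a ha' hy
  have E110 : christoffel (kerrMetric a) (kerrMetricInv a) 1 1 0
      =ᶠ[nhds p] (fun y => -(2*(y 0))/((1-(y 0)^2)*(1+(y 0)^2))) :=
    hmem.mono fun y hy => ch110 a ha' hy
  have E111 : christoffel (kerrMetric a) (kerrMetricInv a) 1 1 1
      =ᶠ[nhds p] (fun _ => (0:ℝ)) := hmem.mono fun y hy => ch111 a ha' hy
  -- partial derivatives of the Christoffel symbols at p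
  have D000_0 : pd 0 (christoffel (kerrMetric a) (kerrMetricInv a) 0 0 0) p
      = (2+6*(p 0)^4)/((1-(p 0)^2)^2*(1+(p 0)^2)^2) :=
    (pd_congr 0 E000).trans (pd0_eval (hd_c000 hp))
  have D000_1 : pd 1 (christoffel (kerrMetric a) (kerrMetricInv a) 0 0 0) p = 0 :=
    (pd_congr 1 E000).trans (pd1_eval (hd_c000 hp))
  have D001_0 : pd 0 (christoffel (kerrMetric a) (kerrMetricInv a) 0 0 1) p = 0 :=
    (pd_congr 0 E001).trans pd_const
  have D001_1 : pd 1 (christoffel (kerrMetric a) (kerrMetricInv a) 0 0 1) p = 0 :=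
    (pd_congr 1 E001).trans pd_const
  have D010_0 : pd 0 (christoffel (kerrMetric a) (kerrMetricInv a) 0 1 0) p = 0 :=
    (pd_congr 0 E010).trans pd_const
  have D010_1 : pd 1 (christoffel (kerrMetric a) (kerrMetricInv a) 0 1 0) p = 0 :=
    (pd_congr 1 E010).trans pd_const
  have D011_0 : pd 0 (christoffel (kerrMetric a) (kerrMetricInv a) 0 1 1) p
      = (8-64*(p 0)^2+24*(p 0)^4)/(1+(p 0)^2)^4 :=
    (pd_congr 0 E011).trans (pd0_eval hd_c011)
  have D011_1 : pd 1 (christoffel (kerrMetric a) (kerrMetricInv a) 0 1 1) p = 0 :=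
    (pd_congr 1 E011).trans (pd1_eval hd_c011)
  have D100_0 : pd 0 (christoffel (kerrMetric a) (kerrMetricInv a) 1 0 0) p = 0 :=
    (pd_congr 0 E100).trans pd_const
  have D100_1 : pd 1 (christoffel (kerrMetric a) (kerrMetricInv a) 1 0 0) p = 0 :=
    (pd_congr 1 E100).trans pd_const
  have D101_0 : pd 0 (christoffel (kerrMetric a) (kerrMetricInv a) 1 0 1) p
      = -((2+6*(p 0)^4)/((1-(p 0)^2)^2*(1+(p 0)^2)^2)) :=
    (pd_congr 0 E101).trans (pd0_eval (hd_c101 hp))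
  have D101_1 : pd 1 (christoffel (kerrMetric a) (kerrMetricInv a) 1 0 1) p = 0 :=
    (pd_congr 1 E101).trans (pd1_eval (hd_c101 hp))
  have D110_0 : pd 0 (christoffel (kerrMetric a) (kerrMetricInv a) 1 1 0) p
      = -((2+6*(p 0)^4)/((1-(p 0)^2)^2*(1+(p 0)^2)^2)) :=
    (pd_congr 0 E110).trans (pd0_eval (hd_c101 hp))
  have D110_1 : pd 1 (christoffel (kerrMetric a) (kerrMetricInv a) 1 1 0) p = 0 :=
    (pd_congr 1 E110).trans (pd1_eval (hd_c101 hp))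
  have D111_0 : pd 0 (christoffel (kerrMetric a) (kerrMetricInv a) 1 1 1) p = 0 :=
    (pd_congr 0 E111).trans pd_const
  have D111_1 : pd 1 (christoffel (kerrMetric a) (kerrMetricInv a) 1 1 1) p = 0 :=
    (pd_congr 1 E111).trans pd_const
  -- the vector field X = raise ginv X♭
  have V0p := v0_eq a ha' hp
  have V1p := v1_eq a ha' hp
  have EV0 : raise (kerrMetricInv a) (kerrXflat a) 0
      =ᶠ[nhds p] (fun y => (2*(y 0)^3-2*(y 0))/(a^2*(1+(y 0)^2)^2)) :=
    hmem.mono fun y hy => v0_eq a ha' hy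
  have EV1 : raise (kerrMetricInv a) (kerrXflat a) 1
      =ᶠ[nhds p] (fun y => 1/(a^2*(1+(y 0)^2))) :=
    hmem.mono fun y hy => v1_eq a ha' hy
  have DV0_0 : pd 0 (raise (kerrMetricInv a) (kerrXflat a) 0) p
      = (-2+12*(p 0)^2-2*(p 0)^4)/(a^2*(1+(p 0)^2)^3) :=
    (pd_congr 0 EV0).trans (pd0_eval (hd_v0 ha'))
  have DV0_1 : pd 1 (raise (kerrMetricInv a) (kerrXflat a) 0) p = 0 :=
    (pd_congr 1 EV0).trans (pd1_eval (hd_v0 ha'))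
  have DV1_0 : pd 0 (raise (kerrMetricInv a) (kerrXflat a) 1) p
      = -(2*(p 0))/(a^2*(1+(p 0)^2)^2) :=
    (pd_congr 0 EV1).trans (pd0_eval (hd_v1 ha'))
  have DV1_1 : pd 1 (raise (kerrMetricInv a) (kerrXflat a) 1) p = 0 :=
    (pd_congr 1 EV1).trans (pd1_eval (hd_v1 ha'))
  -- metric entries and their derivatives at p
  have P000 := pdg000 a hp
  have P100 := pdg100 a hp
  have P011 := pdg011 a p
  have P111 := pdg111 a p
  have Poff0 := pdg_off a 0 p
  have Poff1 := pdg_off a 1 p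
  have Poff0' := pdg_off' a 0 p
  have Poff1' := pdg_off' a 1 p
  have g00p : kerrMetric a p 0 0 = a^2*(1+(p 0)^2)/(1-(p 0)^2) := by simp [kerrMetric]
  have g01p : kerrMetric a p 0 1 = 0 := by simp [kerrMetric]
  have g10p : kerrMetric a p 1 0 = 0 := by simp [kerrMetric]
  have g11p : kerrMetric a p 1 1 = 4*a^2*(1-(p 0)^2)/(1+(p 0)^2) := by simp [kerrMetric]
  have X0p := xf0 a p
  have X1p := xf1 a ha' p
  unfold HorizonEq
  simp only [Fin.forall_fin_two]
  refine ⟨⟨?_, ?_⟩, ?_, ?_⟩ <;>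
  · simp only [ricci, lieMetric, Fin.sum_univ_two,
      D000_0, D000_1, D001_0, D001_1, D010_0, D010_1, D011_0, D011_1,
      D100_0, D100_1, D101_0, D101_1, D110_0, D110_1, D111_0, D111_1,
      c000, c001, c010, c011, c100, c101, c110, c111,
      V0p, V1p, DV0_0, DV0_1, DV1_0, DV1_1,
      P000, P100, P011, P111, Poff0, Poff1, Poff0', Poff1',
      g00p, g01p, g10p, g11p, X0p, X1p, zero_mul, mul_zero]
    field_simp
    ring


end Kerr
end
end

section
/- Every solution of the linear ODE B'' + (2/(β²+x²)²)( x(β²+x²) B' + 2β² B ) + 2λ = 0 with β ≠ 0 is of the form B(x) = ( b₁(β² - x²) + b₂ β x - (λ/3)(x⁴ + 3β⁴) ) / (β² + x²) for constants b₁, b₂. -/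
/-- Every (twice differentiable) solution of the linear ODE
$B'' + \frac{2}{(β²+x²)²}( x(β²+x²) B' + 2β² B ) + 2λ = 0$ with $β ≠ 0$ is of the form
$B(x) = \frac{b₁(β² - x²) + b₂ β x - (λ/3)(x⁴ + 3β⁴)}{β² + x²}$ for constants $b₁, b₂$. -/
theorem ode_general_solution (β lam : ℝ) (hβ : β ≠ 0) (B : ℝ → ℝ)
    (hB : Differentiable ℝ B) (hB' : Differentiable ℝ (deriv B))
    (hode : ∀ x : ℝ, deriv (deriv B) x
      + (2 / (β^2 + x^2)^2) * (x * (β^2 + x^2) * deriv B x + 2 * β^2 * B x)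
      + 2 * lam = 0) :
    ∃ b₁ b₂ : ℝ, ∀ x : ℝ,
      B x = (b₁ * (β^2 - x^2) + b₂ * β * x - (lam / 3) * (x^4 + 3 * β^4))
              / (β^2 + x^2) := by
  have hβ2 : β^2 ≠ 0 := pow_ne_zero 2 hβ
  have hP : ∀ x : ℝ, β^2 + x^2 ≠ 0 := by
    intro x
    have : 0 < β^2 + x^2 := by positivity
    exact ne_of_gt this
  set Bd : ℝ → ℝ := deriv B with hBdDef
  set Bdd : ℝ → ℝ := deriv Bd with hBddDef
  have hBdd : ∀ x, Bdd x = -(2 / (β^2 + x^2)^2) * (x * (β^2 + x^2) * Bd x + 2 * β^2 * B x)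
      - 2 * lam := by
    intro x
    have := hode x
    linarith
  set u : ℝ → ℝ := fun x => (β^2 + x^2) * B x + lam/3 * (x^4 + 3*β^4) with hu
  set v : ℝ → ℝ := fun x => 2*x*B x + (β^2 + x^2) * Bd x + lam/3 * (4*x^3) with hv
  set g : ℝ → ℝ := fun x => 2*B x + 2*x*Bd x - 4*β^2*B x/(β^2+x^2) + 2*lam*x^2 - 2*lam*β^2
    with hg
  have hpoly : ∀ x : ℝ, HasDerivAt (fun x : ℝ => β^2 + x^2) (2*x) x := by
    intro x
    simpa using (hasDerivAt_pow 2 x).const_add (β^2)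
  have hu' : ∀ x, HasDerivAt u (v x) x := by
    intro x
    have h2 := (hpoly x).fun_mul (hB x).hasDerivAt
    have h3 : HasDerivAt (fun x : ℝ => lam/3 * (x^4 + 3*β^4)) (lam/3*(4*x^3)) x := by
      have := ((hasDerivAt_pow 4 x).add_const (3*β^4)).const_mul (lam/3)
      simpa using this
    have := h2.fun_add h3
    convert this using 1
    try simp only [hv]
    try ring
  have hBdHas : ∀ x, HasDerivAt Bd (Bdd x) x := by
    intro x
    exact (hB' x).hasDerivAt
  have hv' : ∀ x, HasDerivAt v (g x) x := by
    intro x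
    have h1 : HasDerivAt (fun x : ℝ => 2*x*B x) (2*B x + 2*x*Bd x) x := by
      have := ((hasDerivAt_id x).const_mul 2).fun_mul (hB x).hasDerivAt
      convert! this using 1
      simp only [id_eq]
      try ring
    have h2 : HasDerivAt (fun x : ℝ => (β^2+x^2)*Bd x) (2*x*Bd x + (β^2+x^2)*Bdd x) x := by
      have := (hpoly x).fun_mul (hBdHas x)
      convert this using 1
      try ring
    have h3 : HasDerivAt (fun x : ℝ => lam/3*(4*x^3)) (4*lam*x^2) x := by
      have := ((hasDerivAt_pow 3 x).const_mul 4).const_mul (lam/3)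
      convert! this using 1
      push_cast
      ring
    have := (h1.fun_add h2).fun_add h3
    convert! this using 1
    try simp only [hg]
    have hx : β^2 + x^2 ≠ 0 := hP x
    rw [hBdd x]
    field_simp
    ring
  have hg' : ∀ x, HasDerivAt g 0 x := by
    intro x
    have h1 : HasDerivAt (fun x : ℝ => 2*B x) (2*Bd x) x := by
      simpa using (hB x).hasDerivAt.const_mul 2
    have h2 : HasDerivAt (fun x : ℝ => 2*x*Bd x) (2*Bd x + 2*x*Bdd x) x := by
      have := ((hasDerivAt_id x).const_mul 2).fun_mul (hBdHas x)
      convert! this using 1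
      simp only [id_eq]
      try ring
    have h3 : HasDerivAt (fun x : ℝ => 4*β^2*B x/(β^2+x^2))
        ((4*β^2*Bd x*(β^2+x^2) - 4*β^2*B x*(2*x))/(β^2+x^2)^2) x := by
      have hn : HasDerivAt (fun x : ℝ => 4*β^2*B x) (4*β^2*Bd x) x := by
        simpa using (hB x).hasDerivAt.const_mul (4*β^2)
      exact hn.div (hpoly x) (hP x)
    have h4 : HasDerivAt (fun x : ℝ => 2*lam*x^2) (4*lam*x) x := by
      have := (hasDerivAt_pow 2 x).const_mul (2*lam)
      convert! this using 1
      push_cast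
      ring
    have h5 : HasDerivAt (fun x : ℝ => 2*lam*β^2) 0 x := hasDerivAt_const x _
    have := ((((h1.fun_add h2).fun_sub h3).fun_add h4).fun_sub h5)
    convert! this using 1
    try simp only [hg]
    have hx : β^2 + x^2 ≠ 0 := hP x
    rw [hBdd x]
    field_simp
    ring
  have hconst : ∀ (f : ℝ → ℝ), (∀ x, HasDerivAt f 0 x) → ∀ x, f x = f 0 := by
    intro f hf x
    exact is_const_of_deriv_eq_zero (fun y => (hf y).differentiableAt)
      (fun y => (hf y).deriv) x 0
  have hgc : ∀ x, g x = g 0 := hconst g hg'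
  have hvx : ∀ x, v x = v 0 + g 0 * x := by
    intro x
    have hd : ∀ y, HasDerivAt (fun x => v x - g 0 * x) 0 y := by
      intro y
      have := (hv' y).fun_sub ((hasDerivAt_id y).const_mul (g 0))
      convert! this using 1
      rw [hgc y]
      ring
    have := hconst _ hd x
    simp at this
    linarith
  have hux : ∀ x, u x = u 0 + v 0 * x + g 0 / 2 * x^2 := by
    intro x
    have hd : ∀ y, HasDerivAt (fun x => u x - v 0 * x - g 0 / 2 * x^2) 0 y := by
      intro y
      have := ((hu' y).fun_sub ((hasDerivAt_id y).const_mul (v 0))).fun_sub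
        ((hasDerivAt_pow 2 y).const_mul (g 0 / 2))
      convert! this using 1
      rw [hvx y]
      push_cast
      ring
    have := hconst _ hd x
    simp at this
    linarith
  have hU0 : u 0 = -(β^2 * g 0) / 2 := by
    simp only [hu, hg]
    field_simp
    ring
  refine ⟨-(g 0)/2, v 0 / β, fun x => ?_⟩
  rw [eq_div_iff (hP x)]
  have h := hux x
  rw [hU0] at h
  simp only [hu] at h
  rw [div_mul_cancel₀ (v 0) hβ]
  nlinarith [h]
end
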